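/- arXiv:1408.4866 — 2 statements merged into one kernel-verified Lean document; each statement's English description precedes it below -/
import Mathlib

section
/- For r ≥ 2, the generating function Σ_n c_{r,n} q^n equals Φ_r(q) · Σ_{k ≥ 1} q^{rk}/(1 - q^{rk}), where Φ_r(q) = Π_{n: r ∤ n}(1-q^n)^{-1} and c_{r,n} = Σ_{j: r∤j} Σ_{k ≥ 1} k·W_{r, r^k j, n}. -/
open Nat Finset PowerSeries
open scoped Classical

/-- The set of `r`-class regular partitions of `n`: no part divisible by `r`. -/
noncomputable def CP (r n : ℕ) : Finset (n.Partition) :=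
  Finset.univ.filter (fun l => ∀ p ∈ l.parts, ¬ r ∣ p)

/-- The number of part-sizes `i` whose multiplicity in `ρ` is at least `j` (for `j ≥ 1`). -/
noncomputable def numGE {n : ℕ} (ρ : n.Partition) (j : ℕ) : ℕ :=
  (ρ.parts.toFinset.filter (fun i => j ≤ ρ.parts.count i)).card

/-- `W r j n = Σ_{ρ ∈ CP_{r,n}} #{i : m_i(ρ) ≥ j}`. -/
noncomputable def W (r j n : ℕ) : ℕ := ∑ ρ ∈ CP r n, numGE ρ j

/-- `c_{r,n} = Σ_{j ≥ 1, r ∤ j} Σ_{k ≥ 1} k · W_{r, r^k j, n}` (the `k = 0` summand vanishes). -/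
noncomputable def cExp (r n : ℕ) : ℕ :=
  ∑' j : ℕ, ∑' k : ℕ, if ¬ r ∣ j then k * W r (r ^ k * j) n else 0

/-- Truncation of `Φ_r(q) = ∏_{k ≥ 1, r ∤ k} (1 - q^k)⁻¹` at `k ≤ N`. -/
noncomputable def PhiTrunc (r N : ℕ) : PowerSeries ℚ :=
  ∏ k ∈ Finset.Icc 1 N, if ¬ r ∣ k then (1 - (PowerSeries.X : PowerSeries ℚ) ^ k)⁻¹ else 1

noncomputable section AuxGF

/-- A convenience constructor for the power series whose coefficients indicate a subset. -/
def indicatorSeries (α : Type*) [Semiring α] (s : Set ℕ) : PowerSeries α :=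
  PowerSeries.mk fun n => if n ∈ s then 1 else 0

theorem coeff_indicator {α : Type*} (s : Set ℕ) [Semiring α] (n : ℕ) :
    coeff (R := α) n (indicatorSeries _ s) = if n ∈ s then 1 else 0 :=
  coeff_mk _ _

theorem constantCoeff_indicator {α : Type*} (s : Set ℕ) [Semiring α] :
    constantCoeff (R := α) (indicatorSeries _ s) = if 0 ∈ s then 1 else 0 :=
  rfl

theorem num_series' {α : Type*} [Field α] (i : ℕ) :
    (1 - (X : PowerSeries α) ^ (i + 1))⁻¹ = indicatorSeries α {k | i + 1 ∣ k} := by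
  rw [PowerSeries.inv_eq_iff_mul_eq_one]
  · ext n
    cases n with
    | zero => simp [mul_sub, zero_pow, constantCoeff_indicator]
    | succ n =>
      simp only [coeff_one, if_false, mul_sub, mul_one, coeff_indicator,
        LinearMap.map_sub, reduceCtorEq]
      simp_rw [coeff_mul, coeff_X_pow, coeff_indicator, @boole_mul _ _ _ _]
      simp only [Set.mem_setOf_eq]
      erw [sum_ite, sum_ite]
      simp_rw [@filter_filter _ _ _ _ _, sum_const_zero, add_zero, sum_const, nsmul_eq_mul, mul_one,
        sub_eq_iff_eq_add, zero_add]
      symm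
      split_ifs with h
      · suffices #{a ∈ antidiagonal (n + 1) | i + 1 ∣ a.fst ∧ a.snd = i + 1} = 1 by
          convert congr_arg ((↑) : ℕ → α) this; norm_cast
        rw [Finset.card_eq_one]
        cases' h with p hp
        refine ⟨((i + 1) * (p - 1), i + 1), ?_⟩
        ext ⟨a₁, a₂⟩
        simp only [mem_filter, Prod.mk.injEq, HasAntidiagonal.mem_antidiagonal, mem_singleton]
        constructor
        · rintro ⟨a_left, ⟨a, rfl⟩, rfl⟩
          refine ⟨?_, rfl⟩
          rw [Nat.mul_sub_left_distrib, ← hp, ← a_left, mul_one, Nat.add_sub_cancel]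
        · rintro ⟨rfl, rfl⟩
          match p with
          | 0 => rw [mul_zero] at hp; cases hp
          | p + 1 => rw [hp]; simp [mul_add]
      · suffices #{a ∈ antidiagonal (n + 1) | i + 1 ∣ a.fst ∧ a.snd = i + 1} = 0 by
          convert congr_arg ((↑) : ℕ → α) this; norm_cast
        rw [Finset.card_eq_zero]
        apply eq_empty_of_forall_notMem
        simp only [Prod.forall, mem_filter, not_and, HasAntidiagonal.mem_antidiagonal]
        rintro _ h₁ h₂ ⟨a, rfl⟩ rfl
        apply h
        simp [← h₂]
  · simp [zero_pow]

theorem partialGF_prop (α : Type*) [CommSemiring α] (n : ℕ) (s : Finset ℕ)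
    (hs : ∀ i ∈ s, 0 < i) (c : ℕ → Set ℕ) (hc : ∀ i, i ∉ s → 0 ∈ c i) :
    #{p : n.Partition | (∀ j, p.parts.count j ∈ c j) ∧ ∀ j ∈ p.parts, j ∈ s} =
      coeff n (∏ i ∈ s, indicatorSeries α ((· * i) '' c i)) := by
  simp_rw [coeff_prod, coeff_indicator, prod_boole, sum_boole]
  apply congr_arg
  simp only [mem_univ, forall_true_left, not_and, not_forall, exists_prop,
    Set.mem_image, not_exists]
  set phiF : (a : Nat.Partition n) →
    a ∈ filter (fun p ↦ (∀ (j : ℕ), Multiset.count j p.parts ∈ c j) ∧ ∀ j ∈ p.parts, j ∈ s) univ →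
    ℕ →₀ ℕ := fun p _ => {
      toFun := fun i => Multiset.count i p.parts • i
      support := Finset.filter (fun i => i ≠ 0) p.parts.toFinset
      mem_support_toFun := fun a => by
        simp only [smul_eq_mul, ne_eq, mul_eq_zero, Multiset.count_eq_zero]
        rw [not_or, not_not]
        simp only [Multiset.mem_toFinset, not_not, mem_filter] }
  refine Finset.card_bij phiF ?_ ?_ ?_
  · intro a ha
    simp only [phiF, not_forall, not_exists, not_and, exists_prop, mem_filter]
    rw [mem_finsuppAntidiag]
    dsimp only [ne_eq, smul_eq_mul, id_eq, eq_mpr_eq_cast, le_eq_subset, Finsupp.coe_mk]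
    simp only [mem_univ, forall_true_left, not_and, not_forall, exists_prop,
      mem_filter, true_and] at ha
    refine ⟨⟨?_, fun i ↦ ?_⟩, fun i _ ↦ ⟨a.parts.count i, ha.1 i, rfl⟩⟩
    · conv_rhs => simp [← a.parts_sum]
      rw [sum_multiset_count_of_subset _ s]
      · simp only [smul_eq_mul]
      · intro i
        simp only [Multiset.mem_toFinset, not_not, mem_filter]
        apply ha.2
    · simp only [ne_eq, Multiset.mem_toFinset, not_not, mem_filter, and_imp]
      exact fun hi _ ↦ ha.2 i hi
  · intro p₁ hp₁ p₂ hp₂ h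
    apply Nat.Partition.ext
    simp only [true_and, mem_univ, mem_filter] at hp₁ hp₂
    ext i
    simp only [phiF, ne_eq, Multiset.mem_toFinset, not_not, smul_eq_mul, Finsupp.mk.injEq] at h
    by_cases hi : i = 0
    · rw [hi]
      rw [Multiset.count_eq_zero_of_notMem]
      · rw [Multiset.count_eq_zero_of_notMem]
        intro a; exact Nat.lt_irrefl 0 (hs 0 (hp₂.2 0 a))
      intro a; exact Nat.lt_irrefl 0 (hs 0 (hp₁.2 0 a))
    · rw [← mul_left_inj' hi]
      rw [funext_iff] at h
      exact h.2 i
  · simp only [phiF, mem_filter, mem_finsuppAntidiag, mem_univ, exists_prop, true_and, and_assoc]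
    rintro f ⟨hf, hf₃, hf₄⟩
    have hf' : f ∈ finsuppAntidiag s n := mem_finsuppAntidiag.mpr ⟨hf, hf₃⟩
    simp only [mem_finsuppAntidiag] at hf'
    refine ⟨⟨∑ i ∈ s, Multiset.replicate (f i / i) i, ?_, ?_⟩, ?_, ?_, ?_⟩
    · intro i hi
      simp only [exists_prop, Multiset.mem_sum, mem_map, Function.Embedding.coeFn_mk] at hi
      rcases hi with ⟨t, ht, z⟩
      apply hs
      rwa [Multiset.eq_of_mem_replicate z]
    · simp_rw [Multiset.sum_sum, Multiset.sum_replicate, Nat.nsmul_eq_mul]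
      rw [← hf'.1]
      refine sum_congr rfl fun i hi => Nat.div_mul_cancel ?_
      rcases hf₄ i hi with ⟨w, _, hw₂⟩
      rw [← hw₂]
      exact dvd_mul_left _ _
    · intro i
      simp_rw [Multiset.count_sum', Multiset.count_replicate, sum_ite_eq']
      split_ifs with h
      · rcases hf₄ i h with ⟨w, hw₁, hw₂⟩
        rwa [← hw₂, Nat.mul_div_cancel _ (hs i h)]
      · exact hc _ h
    · intro i hi
      rw [Multiset.mem_sum] at hi
      rcases hi with ⟨j, hj₁, hj₂⟩
      rwa [Multiset.eq_of_mem_replicate hj₂]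
    · ext i
      simp_rw [Multiset.count_sum', Multiset.count_replicate, sum_ite_eq']
      simp only [ne_eq, Multiset.mem_toFinset, not_not, smul_eq_mul, ite_mul,
        zero_mul, Finsupp.coe_mk]
      split_ifs with h
      · apply Nat.div_mul_cancel
        rcases hf₄ i h with ⟨w, _, hw₂⟩
        apply Dvd.intro_left _ hw₂
      · apply symm
        rw [← Finsupp.notMem_support_iff]
        exact notMem_mono hf'.2 h

end AuxGF

section Arith

variable {r : ℕ} (hr : 2 ≤ r)

lemma lt_pow_self'' (k : ℕ) (hr : 2 ≤ r) : k < r ^ k :=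
  lt_of_lt_of_le (Nat.lt_two_pow_self (n := k)) (Nat.pow_le_pow_left hr k)

lemma maxPow_eq (hr : 2 ≤ r) {j : ℕ} (hj : ¬ r ∣ j) (k : ℕ) : Nat.maxPowDiv r (r ^ k * j) = k := by
  have hk : 0 < j := Nat.pos_of_ne_zero (fun h => hj (h ▸ dvd_zero r))
  have h0 : Nat.maxPowDiv r j = 0 := by
    by_contra h
    exact hj (dvd_trans (dvd_pow_self r (Nat.pos_of_ne_zero h).ne') (Nat.maxPowDiv.pow_dvd))
  rw [show Nat.maxPowDiv r (r ^ k * j) = padicValNat r (r ^ k * j) from rfl,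
    Nat.maxPowDiv.base_pow_mul hr hk.ne', ← show Nat.maxPowDiv r j = padicValNat r j from rfl,
    h0, Nat.zero_add]

lemma not_dvd_div_maxPow (hr : 2 ≤ r) {t : ℕ} (ht : 0 < t) :
    ¬ r ∣ t / r ^ (Nat.maxPowDiv r t) := by
  intro hdvd
  have h1 : r ^ (Nat.maxPowDiv r t) ∣ t := Nat.maxPowDiv.pow_dvd
  have h2 : r ^ (Nat.maxPowDiv r t + 1) ∣ t := by
    obtain ⟨c, hc⟩ := hdvd
    refine ⟨c, ?_⟩
    rw [pow_succ, mul_assoc, ← hc, Nat.mul_div_cancel' h1]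
  have : Nat.maxPowDiv r t + 1 ≤ Nat.maxPowDiv r t :=
    (Nat.pow_dvd_iff_le_padicValNat (show r ≠ 1 by omega) ht.ne').mp h2
  omega

lemma maxPow_div_mul {t : ℕ} : r ^ (Nat.maxPowDiv r t) * (t / r ^ (Nat.maxPowDiv r t)) = t :=
  Nat.mul_div_cancel' (Nat.maxPowDiv.pow_dvd)

end Arith

section PartitionLemmas

variable {r n : ℕ}

lemma part_pos_of_mem {n : ℕ} {ρ : n.Partition} {i : ℕ} (h : i ∈ ρ.parts) : 0 < i :=
  ρ.parts_pos h

lemma part_le_of_mem {n : ℕ} {ρ : n.Partition} {i : ℕ} (h : i ∈ ρ.parts) : i ≤ n := by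
  conv_rhs => rw [← ρ.parts_sum]
  exact Multiset.single_le_sum (fun x _ => Nat.zero_le x) i h

lemma count_mul_le {n : ℕ} (ρ : n.Partition) (i : ℕ) : ρ.parts.count i * i ≤ n := by
  have hle : Multiset.replicate (ρ.parts.count i) i ≤ ρ.parts :=
    Multiset.le_count_iff_replicate_le.mp le_rfl
  have := congrArg Multiset.sum (tsub_add_cancel_of_le hle)
  rw [Multiset.sum_add, Multiset.sum_replicate, smul_eq_mul, ρ.parts_sum] at this
  omega

lemma count_le {n : ℕ} (ρ : n.Partition) (i : ℕ) : ρ.parts.count i ≤ n := by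
  rcases Nat.eq_zero_or_pos i with h | h
  · subst h
    rw [Multiset.count_eq_zero_of_notMem]
    · exact Nat.zero_le n
    · intro hmem; exact absurd (ρ.parts_pos hmem) (lt_irrefl 0)
  · have := count_mul_le ρ i
    calc ρ.parts.count i ≤ ρ.parts.count i * i := Nat.le_mul_of_pos_right _ h
    _ ≤ n := this

lemma W_eq_zero {j : ℕ} (hj : n < j) : W r j n = 0 := by
  apply Finset.sum_eq_zero
  intro ρ _
  rw [numGE]
  rw [Finset.card_eq_zero, Finset.filter_eq_empty_iff]
  intro i _
  have := count_le ρ i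
  omega

lemma numGE_eq {ρ : n.Partition} {j : ℕ} (hj : 1 ≤ j) :
    numGE ρ j = ∑ i ∈ Finset.Icc 1 n, if j ≤ ρ.parts.count i then 1 else 0 := by
  rw [numGE, Finset.card_filter]
  apply Finset.sum_subset
  · intro i hi
    rw [Multiset.mem_toFinset] at hi
    rw [Finset.mem_Icc]
    exact ⟨ρ.parts_pos hi, part_le_of_mem hi⟩
  · intro i _ hi
    rw [Multiset.mem_toFinset] at hi
    rw [Multiset.count_eq_zero_of_notMem hi, if_neg (by omega)]

/-- Removing `t` copies of the part `i` gives a bijection. -/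
lemma cardP (hr : 2 ≤ r) {i t : ℕ} (hi : ¬ r ∣ i) (ht : 1 ≤ t) (hit : i * t ≤ n) :
    ((CP r n).filter (fun ρ => t ≤ ρ.parts.count i)).card = (CP r (n - i * t)).card := by
  have hipos : 0 < i := Nat.pos_of_ne_zero (fun h => hi (h ▸ dvd_zero r))
  refine Finset.card_bij'
    (fun ρ hρ =>
      { parts := ρ.parts - Multiset.replicate t i
        parts_pos := fun hp => ρ.parts_pos (Multiset.mem_of_le (Multiset.sub_le_self _ _) hp)
        parts_sum := by
          have hc : t ≤ ρ.parts.count i := (Finset.mem_filter.mp hρ).2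
          have hle := Multiset.le_count_iff_replicate_le.mp hc
          have hsum := congrArg Multiset.sum (tsub_add_cancel_of_le hle)
          rw [Multiset.sum_add, Multiset.sum_replicate, smul_eq_mul, ρ.parts_sum] at hsum
          rw [mul_comm i t]
          exact Nat.eq_sub_of_add_eq hsum })
    (fun σ hσ =>
      { parts := σ.parts + Multiset.replicate t i
        parts_pos := fun hp => by
          rcases Multiset.mem_add.mp hp with h | h
          · exact σ.parts_pos h
          · rw [Multiset.eq_of_mem_replicate h]; exact hipos
        parts_sum := by
          rw [Multiset.sum_add, Multiset.sum_replicate, smul_eq_mul, σ.parts_sum, mul_comm t i]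
          exact Nat.sub_add_cancel hit })
    ?_ ?_ ?_ ?_
  · intro ρ hρ
    rw [CP, Finset.mem_filter]
    refine ⟨Finset.mem_univ _, fun p hp => ?_⟩
    have hρ' := (Finset.mem_filter.mp hρ).1
    rw [CP, Finset.mem_filter] at hρ'
    exact hρ'.2 p (Multiset.mem_of_le (Multiset.sub_le_self _ _) hp)
  · intro σ hσ
    rw [CP, Finset.mem_filter] at hσ
    rw [Finset.mem_filter, CP, Finset.mem_filter]
    refine ⟨⟨Finset.mem_univ _, fun p hp => ?_⟩, ?_⟩
    · rcases Multiset.mem_add.mp hp with h | h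
      · exact hσ.2 p h
      · rw [Multiset.eq_of_mem_replicate h]; exact hi
    · show t ≤ Multiset.count i (σ.parts + Multiset.replicate t i)
      rw [Multiset.count_add, Multiset.count_replicate_self]
      omega
  · intro ρ hρ
    apply Nat.Partition.ext
    show (ρ.parts - Multiset.replicate t i) + Multiset.replicate t i = ρ.parts
    have hc : t ≤ ρ.parts.count i := (Finset.mem_filter.mp hρ).2
    exact tsub_add_cancel_of_le (Multiset.le_count_iff_replicate_le.mp hc)
  · intro σ hσ
    apply Nat.Partition.ext
    show (σ.parts + Multiset.replicate t i) - Multiset.replicate t i = σ.parts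
    simp

lemma cardP_zero {i t : ℕ} (ht : 1 ≤ t) (hit : n < i * t) :
    ((CP r n).filter (fun ρ => t ≤ ρ.parts.count i)).card = 0 := by
  rw [Finset.card_eq_zero, Finset.filter_eq_empty_iff]
  intro ρ _
  intro hcount
  have := count_mul_le ρ i
  have : i * t ≤ ρ.parts.count i * i := by
    rw [mul_comm i t]
    exact Nat.mul_le_mul_right i hcount
  omega

lemma cardP_zero' {i t : ℕ} (hri : r ∣ i) (ht : 1 ≤ t) :
    ((CP r n).filter (fun ρ => t ≤ ρ.parts.count i)).card = 0 := by
  rw [Finset.card_eq_zero, Finset.filter_eq_empty_iff]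
  intro ρ hρ hcount
  rw [CP, Finset.mem_filter] at hρ
  have hmem : i ∈ ρ.parts := Multiset.count_pos.mp (by omega)
  exact hρ.2 i hmem hri

end PartitionLemmas

section Main

variable {r n : ℕ}

lemma cExp_eq_finite (hr : 2 ≤ r) :
    cExp r n = ∑ j ∈ Finset.range (n + 1), ∑ k ∈ Finset.range (n + 1),
      if ¬ r ∣ j then k * W r (r ^ k * j) n else 0 := by
  rw [cExp]
  have houter : ∀ j ∉ Finset.range (n + 1),
      (∑' k : ℕ, if ¬ r ∣ j then k * W r (r ^ k * j) n else 0) = 0 := by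
    intro j hj
    rw [Finset.mem_range, not_lt] at hj
    have hz : ∀ k : ℕ, (if ¬ r ∣ j then k * W r (r ^ k * j) n else 0) = 0 := by
      intro k
      by_cases hrj : r ∣ j
      · rw [if_neg (not_not_intro hrj)]
      · rw [if_pos hrj]
        have hjpos : 1 ≤ j := by
          rcases Nat.eq_zero_or_pos j with h | h
          · exact absurd (h ▸ dvd_zero r) hrj
          · exact h
        have : n < r ^ k * j := by
          have h1 : j ≤ r ^ k * j := Nat.le_mul_of_pos_left j (Nat.pow_pos (n := k) (by omega))
          omega
        rw [W_eq_zero this, mul_zero]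
    simp only [hz, tsum_zero]
  rw [tsum_eq_sum houter]
  apply Finset.sum_congr rfl
  intro j _
  rw [tsum_eq_sum (s := Finset.range (n + 1))]
  intro k hk
  rw [Finset.mem_range, not_lt] at hk
  by_cases hrj : r ∣ j
  · rw [if_neg (not_not_intro hrj)]
  · rw [if_pos hrj]
    have hjpos : 1 ≤ j := by
      rcases Nat.eq_zero_or_pos j with h | h
      · exact absurd (h ▸ dvd_zero r) hrj
      · exact h
    have hn : n < r ^ k * j := by
      calc n < 2 ^ n := Nat.lt_two_pow_self
      _ ≤ 2 ^ k := Nat.pow_le_pow_right (by omega) (by omega)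
      _ ≤ r ^ k := Nat.pow_le_pow_left hr k
      _ ≤ r ^ k * j := Nat.le_mul_of_pos_right _ hjpos
    rw [W_eq_zero hn, mul_zero]

lemma claimA (hr : 2 ≤ r) {m : ℕ} (hm : m ≤ n) :
    (∑ j ∈ Finset.range (n + 1), ∑ k ∈ Finset.range (n + 1),
      if ¬ r ∣ j ∧ r ^ k * j ≤ m then k else 0)
    = ∑ l ∈ Finset.Icc 1 n, ∑ t ∈ Finset.Icc 1 n,
        if r ^ l ∣ t ∧ t ≤ m then 1 else 0 := by
  have step1 : ∀ j, ∀ k ∈ Finset.range (n + 1),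
      (if ¬ r ∣ j ∧ r ^ k * j ≤ m then k else 0)
      = ∑ l ∈ Finset.Icc 1 n, if (¬ r ∣ j ∧ r ^ k * j ≤ m) ∧ l ≤ k then 1 else 0 := by
    intro j k hk
    rw [Finset.mem_range] at hk
    by_cases hP : ¬ r ∣ j ∧ r ^ k * j ≤ m
    · rw [if_pos hP]
      have hcong : ∀ l ∈ Finset.Icc 1 n,
          (if (¬ r ∣ j ∧ r ^ k * j ≤ m) ∧ l ≤ k then 1 else 0)
          = if l ≤ k then 1 else 0 := by
        intro l _
        split_ifs with h1 h2 h3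
        · rfl
        · exact absurd h1.2 h2
        · exact absurd ⟨hP, h3⟩ h1
        · rfl
      rw [Finset.sum_congr rfl hcong, ← Finset.card_filter]
      have hfil : Finset.filter (fun l => l ≤ k) (Finset.Icc 1 n) = Finset.Icc 1 k := by
        ext l
        simp only [Finset.mem_filter, Finset.mem_Icc]
        omega
      rw [hfil, Nat.card_Icc]
      omega
    · rw [if_neg hP]
      symm
      apply Finset.sum_eq_zero
      intro l _
      rw [if_neg (fun h => hP h.1)]
  rw [Finset.sum_congr rfl (fun j _ => Finset.sum_congr rfl (step1 j))]
  have hswap1 : ∀ j ∈ Finset.range (n + 1),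
      (∑ k ∈ Finset.range (n + 1), ∑ l ∈ Finset.Icc 1 n,
        if (¬ r ∣ j ∧ r ^ k * j ≤ m) ∧ l ≤ k then 1 else 0)
      = ∑ l ∈ Finset.Icc 1 n, ∑ k ∈ Finset.range (n + 1),
        if (¬ r ∣ j ∧ r ^ k * j ≤ m) ∧ l ≤ k then 1 else 0 := fun j _ => Finset.sum_comm
  rw [Finset.sum_congr rfl hswap1, Finset.sum_comm]
  apply Finset.sum_congr rfl
  intro l hl
  rw [Finset.mem_Icc] at hl
  rw [← Finset.sum_product']
  rw [← Finset.card_filter, ← Finset.card_filter]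
  refine Finset.card_bij' (fun x _ => r ^ x.2 * x.1)
    (fun t _ => (t / r ^ (Nat.maxPowDiv r t), Nat.maxPowDiv r t)) ?_ ?_ ?_ ?_
  · rintro ⟨j, k⟩ hx
    rw [Finset.mem_filter] at hx
    obtain ⟨hmem, ⟨hj, hjm⟩, hlk⟩ := hx
    rw [Finset.mem_filter, Finset.mem_Icc]
    have hjpos : 1 ≤ j := by
      rcases Nat.eq_zero_or_pos j with h | h
      · exact absurd (h ▸ dvd_zero r) hj
      · exact h
    refine ⟨⟨?_, le_trans hjm hm⟩, ?_, hjm⟩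
    · have : 1 ≤ r ^ k := Nat.one_le_pow k r (by omega)
      nlinarith
    · exact dvd_mul_of_dvd_left (pow_dvd_pow r hlk) j
  · intro t ht
    rw [Finset.mem_filter, Finset.mem_Icc] at ht
    obtain ⟨⟨ht1, htn⟩, hdvd, htm⟩ := ht
    have htpos : 0 < t := by omega
    set K := Nat.maxPowDiv r t with hK
    have hKdvd : r ^ K ∣ t := Nat.maxPowDiv.pow_dvd
    have hrK : r ^ K ≤ t := Nat.le_of_dvd htpos hKdvd
    have hKlt : K < r ^ K := lt_pow_self'' K hr
    rw [Finset.mem_filter, Finset.mem_product, Finset.mem_range, Finset.mem_range]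
    refine ⟨⟨?_, ?_⟩, ⟨?_, ?_⟩, ?_⟩
    · have : t / r ^ K ≤ t := Nat.div_le_self t _
      omega
    · omega
    · exact not_dvd_div_maxPow hr htpos
    · show r ^ K * (t / r ^ K) ≤ m
      rw [hK, maxPow_div_mul]
      exact htm
    · exact (Nat.pow_dvd_iff_le_padicValNat (show r ≠ 1 by omega) htpos.ne').mp hdvd
  · rintro ⟨j, k⟩ hx
    rw [Finset.mem_filter] at hx
    obtain ⟨hmem, ⟨hj, hjm⟩, hlk⟩ := hx
    have hjpos : 0 < j := by
      rcases Nat.eq_zero_or_pos j with h | h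
      · exact absurd (h ▸ dvd_zero r) hj
      · exact h
    have hmax : Nat.maxPowDiv r (r ^ k * j) = k := maxPow_eq hr hj k
    have : r ^ k * j / r ^ Nat.maxPowDiv r (r ^ k * j) = j := by
      rw [hmax]
      exact Nat.mul_div_cancel_left j (Nat.pow_pos (n := k) (by omega))
    rw [Prod.mk.injEq]
    exact ⟨this, hmax⟩
  · intro t ht
    exact maxPow_div_mul

lemma sum_swap4 {A B C D : Type*} (sa : Finset A) (sb : Finset B) (sc : Finset C)
    (sd : Finset D) (f : A → B → C → D → ℕ) :
    (∑ a ∈ sa, ∑ b ∈ sb, ∑ c ∈ sc, ∑ d ∈ sd, f a b c d)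
      = ∑ c ∈ sc, ∑ d ∈ sd, ∑ a ∈ sa, ∑ b ∈ sb, f a b c d := by
  have h1 : ∀ a ∈ sa, (∑ b ∈ sb, ∑ c ∈ sc, ∑ d ∈ sd, f a b c d)
      = ∑ c ∈ sc, ∑ b ∈ sb, ∑ d ∈ sd, f a b c d := fun a _ => Finset.sum_comm
  rw [Finset.sum_congr rfl h1, Finset.sum_comm]
  apply Finset.sum_congr rfl
  intro c _
  have h2 : ∀ a ∈ sa, (∑ b ∈ sb, ∑ d ∈ sd, f a b c d)
      = ∑ d ∈ sd, ∑ b ∈ sb, f a b c d := fun a _ => Finset.sum_comm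
  rw [Finset.sum_congr rfl h2, Finset.sum_comm]

lemma mainNat (hr : 2 ≤ r) :
    cExp r n = ∑ k ∈ Finset.Icc 1 n, ∑ u ∈ Finset.Icc 1 n,
      if r * k ∣ u then (CP r (n - u)).card else 0 := by
  rw [cExp_eq_finite hr]
  -- Step 1: expand W and numGE
  have hterm : ∀ j k : ℕ, (if ¬ r ∣ j then k * W r (r ^ k * j) n else 0)
      = ∑ ρ ∈ CP r n, ∑ i ∈ Finset.Icc 1 n,
          if ¬ r ∣ j ∧ r ^ k * j ≤ ρ.parts.count i then k else 0 := by
    intro j k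
    by_cases hj : ¬ r ∣ j
    · rw [if_pos hj, W, Finset.mul_sum]
      apply Finset.sum_congr rfl
      intro ρ _
      have hjpos : 1 ≤ j := by
        rcases Nat.eq_zero_or_pos j with h | h
        · exact absurd (h ▸ dvd_zero r) hj
        · exact h
      have h1 : 1 ≤ r ^ k * j :=
        Nat.mul_pos (Nat.pow_pos (n := k) (by omega)) hjpos
      rw [numGE_eq h1, Finset.mul_sum]
      apply Finset.sum_congr rfl
      intro i _
      rw [mul_ite, mul_one, mul_zero]
      split_ifs with h2 h3 h4
      · rfl
      · exact absurd h2 (fun hh => h3 ⟨hj, hh⟩)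
      · exact absurd h4.2 h2
      · rfl
    · rw [if_neg hj]
      symm
      apply Finset.sum_eq_zero
      intro ρ _
      apply Finset.sum_eq_zero
      intro i _
      rw [if_neg (fun h => hj h.1)]
  rw [Finset.sum_congr rfl (fun j _ => Finset.sum_congr rfl (fun k _ => hterm j k))]
  -- Step 2: swap sums, apply claimA per (ρ, i)
  rw [sum_swap4]
  have hA : ∀ ρ ∈ CP r n, ∀ i ∈ Finset.Icc 1 n,
      (∑ j ∈ Finset.range (n + 1), ∑ k ∈ Finset.range (n + 1),
        if ¬ r ∣ j ∧ r ^ k * j ≤ ρ.parts.count i then k else 0)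
      = ∑ l ∈ Finset.Icc 1 n, ∑ t ∈ Finset.Icc 1 n,
          if r ^ l ∣ t ∧ t ≤ ρ.parts.count i then 1 else 0 :=
    fun ρ _ i _ => claimA hr (count_le ρ i)
  rw [Finset.sum_congr rfl (fun ρ hρ => Finset.sum_congr rfl (hA ρ hρ))]
  -- Step 3: move the ρ-sum innermost
  rw [Finset.sum_comm]
  have hswap : ∀ i ∈ Finset.Icc 1 n,
      (∑ ρ ∈ CP r n, ∑ l ∈ Finset.Icc 1 n, ∑ t ∈ Finset.Icc 1 n,
        if r ^ l ∣ t ∧ t ≤ ρ.parts.count i then 1 else 0)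
      = ∑ l ∈ Finset.Icc 1 n, ∑ t ∈ Finset.Icc 1 n, ∑ ρ ∈ CP r n,
        if r ^ l ∣ t ∧ t ≤ ρ.parts.count i then 1 else 0 := by
    intro i _
    rw [Finset.sum_comm]
    exact Finset.sum_congr rfl (fun l _ => Finset.sum_comm)
  rw [Finset.sum_congr rfl hswap]
  -- Step 4: the ρ-sum is a cardinality; apply cardP
  have hcard : ∀ i ∈ Finset.Icc 1 n, ∀ l ∈ Finset.Icc 1 n, ∀ t ∈ Finset.Icc 1 n,
      (∑ ρ ∈ CP r n, if r ^ l ∣ t ∧ t ≤ ρ.parts.count i then 1 else 0)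
      = if r ^ l ∣ t ∧ ¬ r ∣ i ∧ i * t ≤ n then (CP r (n - i * t)).card else 0 := by
    intro i hi l _ t ht
    rw [Finset.mem_Icc] at hi ht
    by_cases hd : r ^ l ∣ t
    · have hsum : (∑ ρ ∈ CP r n, if r ^ l ∣ t ∧ t ≤ ρ.parts.count i then 1 else 0)
          = ((CP r n).filter (fun ρ => t ≤ ρ.parts.count i)).card := by
        rw [Finset.card_filter]
        apply Finset.sum_congr rfl
        intro ρ _
        split_ifs with h1 h2 h3
        · rfl
        · exact absurd h1.2 h2
        · exact absurd ⟨hd, h3⟩ h1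
        · rfl
      rw [hsum]
      by_cases hri : r ∣ i
      · rw [cardP_zero' hri (by omega), if_neg (fun h => h.2.1 hri)]
      · by_cases hit : i * t ≤ n
        · rw [cardP hr hri (by omega) hit, if_pos ⟨hd, hri, hit⟩]
        · rw [cardP_zero (by omega) (by omega), if_neg (fun h => hit h.2.2)]
    · rw [if_neg (fun h => hd h.1)]
      apply Finset.sum_eq_zero
      intro ρ _
      rw [if_neg (fun h => hd h.1)]
  rw [Finset.sum_congr rfl (fun i hi => Finset.sum_congr rfl
    (fun l hl => Finset.sum_congr rfl (hcard i hi l hl)))]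
  -- Step 5: final reindexing bijection
  have hL : (∑ i ∈ Finset.Icc 1 n, ∑ l ∈ Finset.Icc 1 n, ∑ t ∈ Finset.Icc 1 n,
      if r ^ l ∣ t ∧ ¬ r ∣ i ∧ i * t ≤ n then (CP r (n - i * t)).card else 0)
      = ∑ x ∈ Finset.Icc 1 n ×ˢ (Finset.Icc 1 n ×ˢ Finset.Icc 1 n),
          if r ^ x.2.1 ∣ x.2.2 ∧ ¬ r ∣ x.1 ∧ x.1 * x.2.2 ≤ n
            then (CP r (n - x.1 * x.2.2)).card else 0 := by
    rw [Finset.sum_product]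
    apply Finset.sum_congr rfl
    intro i _
    rw [Finset.sum_product]
  have hR : (∑ k ∈ Finset.Icc 1 n, ∑ u ∈ Finset.Icc 1 n,
      if r * k ∣ u then (CP r (n - u)).card else 0)
      = ∑ y ∈ Finset.Icc 1 n ×ˢ Finset.Icc 1 n,
          if r * y.1 ∣ y.2 then (CP r (n - y.2)).card else 0 := by
    rw [Finset.sum_product]
  rw [hL, hR, ← Finset.sum_filter, ← Finset.sum_filter]
  refine Finset.sum_bij' (i := fun x _ => (x.1 * r ^ (x.2.1 - 1), x.1 * x.2.2))
    (j := fun y _ => (y.1 / r ^ (Nat.maxPowDiv r y.1), Nat.maxPowDiv r y.1 + 1,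
      y.2 / (y.1 / r ^ (Nat.maxPowDiv r y.1)))) ?_ ?_ ?_ ?_ ?_
  · rintro ⟨i, l, t⟩ hx
    simp only [Finset.mem_filter, Finset.mem_product, Finset.mem_Icc] at hx ⊢
    obtain ⟨⟨⟨hi1, hin⟩, ⟨hl1, hln⟩, ht1, htn⟩, hdvd, hri, hit⟩ := hx
    have hrl : r * (i * r ^ (l - 1)) = i * r ^ l := by
      rw [mul_comm r (i * r ^ (l - 1)), mul_assoc, ← pow_succ]
      congr 2
      omega
    have hdu : r * (i * r ^ (l - 1)) ∣ i * t := by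
      rw [hrl]
      exact mul_dvd_mul_left i hdvd
    have hupos : 1 ≤ i * t := Nat.mul_pos hi1 ht1
    have hrku : r * (i * r ^ (l - 1)) ≤ i * t := Nat.le_of_dvd hupos hdu
    refine ⟨⟨⟨?_, ?_⟩, ?_, ?_⟩, hdu⟩
    · exact Nat.mul_pos hi1 (Nat.pow_pos (by omega))
    · nlinarith
    · exact hupos
    · omega
  · rintro ⟨k, u⟩ hy
    simp only [Finset.mem_filter, Finset.mem_product, Finset.mem_Icc] at hy ⊢
    obtain ⟨⟨⟨hk1, hkn⟩, hu1, hun⟩, hdvd⟩ := hy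
    have hkpos : 0 < k := by omega
    set D := Nat.maxPowDiv r k with hD
    have hDdvd : r ^ D ∣ k := Nat.maxPowDiv.pow_dvd
    have hrD : r ^ D ≤ k := Nat.le_of_dvd hkpos hDdvd
    have hDlt : D < r ^ D := lt_pow_self'' D hr
    have hipos : 0 < k / r ^ D := Nat.div_pos hrD (Nat.pow_pos (by omega))
    have hik : r ^ D * (k / r ^ D) = k := Nat.mul_div_cancel' hDdvd
    obtain ⟨c, hc⟩ := hdvd
    have hcpos : 0 < c := by
      rcases Nat.eq_zero_or_pos c with h | h
      · subst h; omega
      · exact h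
    have hu_eq : u = (k / r ^ D) * (r ^ (D + 1) * c) := by
      rw [hc]
      conv_lhs => rw [← hik]
      ring
    have ht_eq : u / (k / r ^ D) = r ^ (D + 1) * c := by
      rw [hu_eq]
      exact Nat.mul_div_cancel_left _ hipos
    refine ⟨⟨⟨?_, ?_⟩, ⟨?_, ?_⟩, ?_, ?_⟩, ?_, ?_, ?_⟩
    · exact hipos
    · have : k / r ^ D ≤ k := Nat.div_le_self _ _
      omega
    · omega
    · omega
    · rw [ht_eq]
      exact Nat.mul_pos (Nat.pow_pos (by omega)) hcpos
    · have : u / (k / r ^ D) ≤ u := Nat.div_le_self _ _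
      omega
    · rw [ht_eq]
      exact Dvd.intro c rfl
    · exact not_dvd_div_maxPow hr hkpos
    · rw [ht_eq, ← hu_eq]
      omega
  · rintro ⟨i, l, t⟩ hx
    simp only [Finset.mem_filter, Finset.mem_product, Finset.mem_Icc] at hx
    obtain ⟨⟨⟨hi1, hin⟩, ⟨hl1, hln⟩, ht1, htn⟩, hdvd, hri, hit⟩ := hx
    have hmax : Nat.maxPowDiv r (i * r ^ (l - 1)) = l - 1 := by
      rw [mul_comm]
      exact maxPow_eq hr hri (l - 1)
    have hdiv : i * r ^ (l - 1) / r ^ (l - 1) = i :=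
      Nat.mul_div_cancel i (Nat.pow_pos (by omega))
    simp only [Prod.mk.injEq]
    refine ⟨?_, ?_, ?_⟩
    · rw [hmax, hdiv]
    · omega
    · rw [hmax, hdiv]
      exact Nat.mul_div_cancel_left t hi1
  · rintro ⟨k, u⟩ hy
    simp only [Finset.mem_filter, Finset.mem_product, Finset.mem_Icc] at hy
    obtain ⟨⟨⟨hk1, hkn⟩, hu1, hun⟩, hdvd⟩ := hy
    have hkpos : 0 < k := by omega
    have hDdvd : r ^ (Nat.maxPowDiv r k) ∣ k := Nat.maxPowDiv.pow_dvd
    have hik : k / r ^ (Nat.maxPowDiv r k) * r ^ (Nat.maxPowDiv r k) = k :=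
      Nat.div_mul_cancel hDdvd
    have hiu : k / r ^ (Nat.maxPowDiv r k) ∣ u := by
      refine dvd_trans ?_ (dvd_trans (Dvd.intro_left r rfl) hdvd)
      exact Dvd.intro _ hik
    simp only [Prod.mk.injEq]
    constructor
    · rw [Nat.add_sub_cancel]
      exact hik
    · exact Nat.mul_div_cancel' hiu
  · rintro ⟨i, l, t⟩ hx
    rfl

lemma num_series'' (d : ℕ) (hd : 1 ≤ d) :
    (1 - (X : PowerSeries ℚ) ^ d)⁻¹ = indicatorSeries ℚ {k | d ∣ k} := by
  have := num_series' (α := ℚ) (d - 1)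
  rwa [Nat.sub_add_cancel hd] at this

lemma coeff_PhiTrunc (hr : 2 ≤ r) {N : ℕ} (hN : n ≤ N) :
    (coeff n) (PhiTrunc r N) = ((CP r n).card : ℚ) := by
  set s := (Finset.Icc 1 N).filter (fun k => ¬ r ∣ k) with hs
  have hs1 : ∀ i ∈ s, 0 < i := by
    intro i hi
    rw [hs, Finset.mem_filter, Finset.mem_Icc] at hi
    omega
  have key := partialGF_prop ℚ n s hs1 (fun _ => Set.univ) (fun _ _ => trivial)
  have hpe : ∏ i ∈ s, indicatorSeries ℚ ((· * i) '' Set.univ) = PhiTrunc r N := by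
    rw [PhiTrunc, ← Finset.prod_filter, ← hs]
    apply Finset.prod_congr rfl
    intro i hi
    have hset : ((· * i) '' Set.univ : Set ℕ) = {k | i ∣ k} := by
      ext k
      simp only [Set.mem_image, Set.mem_univ, true_and, Set.mem_setOf_eq]
      constructor
      · rintro ⟨a, rfl⟩; exact Dvd.intro_left a rfl
      · rintro ⟨a, rfl⟩; exact ⟨a, mul_comm a i⟩
    rw [num_series'' i (hs1 i hi), hset]
  rw [hpe] at key
  rw [← key]
  norm_cast
  congr 1
  ext ρ
  simp only [CP, Finset.mem_filter, Finset.mem_univ, true_and, Set.mem_univ, forall_const,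
    true_and]
  constructor
  · intro h p hp
    have := h p hp
    rw [hs, Finset.mem_filter] at this
    exact this.2
  · intro h j hj
    rw [hs, Finset.mem_filter, Finset.mem_Icc]
    exact ⟨⟨ρ.parts_pos hj, le_trans (part_le_of_mem hj) hN⟩, h j hj⟩

lemma coeff_term (hr : 2 ≤ r) {d : ℕ} (hd : 1 ≤ d) :
    (coeff n) (PhiTrunc r n * ((X : PowerSeries ℚ) ^ d * (1 - (X : PowerSeries ℚ) ^ d)⁻¹))
      = ∑ u ∈ Finset.Icc 1 n, if d ∣ u then ((CP r (n - u)).card : ℚ) else 0 := by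
  have hind : (X : PowerSeries ℚ) ^ d * (1 - (X : PowerSeries ℚ) ^ d)⁻¹
      = indicatorSeries ℚ {m | d ∣ m ∧ m ≠ 0} := by
    rw [num_series'' d hd, mul_comm]
    ext m
    rw [PowerSeries.coeff_mul_X_pow']
    simp only [coeff_indicator, Set.mem_setOf_eq]
    by_cases h1 : d ≤ m
    · rw [if_pos h1]
      by_cases h2 : d ∣ m - d
      · have hm : d ∣ m := by
          have := Nat.dvd_add h2 (dvd_refl d)
          rwa [Nat.sub_add_cancel h1] at this
        rw [if_pos h2, if_pos ⟨hm, by omega⟩]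
      · rw [if_neg h2, if_neg]
        rintro ⟨hdvd, -⟩
        exact h2 (Nat.dvd_sub hdvd dvd_rfl)
    · rw [if_neg h1, eq_comm, if_neg]
      rintro ⟨hdvd, hne⟩
      exact h1 (Nat.le_of_dvd (by omega) hdvd)
  rw [hind, mul_comm, coeff_mul, Finset.Nat.sum_antidiagonal_eq_sum_range_succ
    (fun a b => (coeff a) (indicatorSeries ℚ {m | d ∣ m ∧ m ≠ 0}) * (coeff b) (PhiTrunc r n))]
  have hstep : ∀ u ∈ Finset.range (n + 1),
      (coeff u) (indicatorSeries ℚ {m | d ∣ m ∧ m ≠ 0}) * (coeff (n - u)) (PhiTrunc r n)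
      = if d ∣ u ∧ u ≠ 0 then ((CP r (n - u)).card : ℚ) else 0 := by
    intro u hu
    rw [coeff_indicator, coeff_PhiTrunc hr (by omega)]
    split_ifs with h h2 h3
    · rw [one_mul]
    · exact absurd h h2
    · exact absurd h3 h
    · rw [zero_mul]
  rw [Finset.sum_congr rfl hstep]
  rw [eq_comm]
  have hcong : ∀ u ∈ Finset.Icc 1 n,
      (if d ∣ u then ((CP r (n - u)).card : ℚ) else 0)
      = if d ∣ u ∧ u ≠ 0 then ((CP r (n - u)).card : ℚ) else 0 := by
    intro u hu
    rw [Finset.mem_Icc] at hu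
    split_ifs with h h2 h3
    · rfl
    · exact absurd ⟨h, by omega⟩ h2
    · exact absurd h3.1 h
    · rfl
  rw [Finset.sum_congr rfl hcong]
  apply Finset.sum_subset
  · intro u hu
    rw [Finset.mem_Icc] at hu
    rw [Finset.mem_range]
    omega
  · intro u hu hnu
    rw [Finset.mem_range] at hu
    rw [Finset.mem_Icc] at hnu
    rw [if_neg]
    rintro ⟨-, hne⟩
    omega

end Main

/-- `Σ_n c_{r,n} q^n = Φ_r(q) · Σ_{k ≥ 1} q^{rk}/(1-q^{rk})`, stated coefficient-wise (the sum
over `k` is truncated at `k ≤ n`, which does not affect the `n`-th coefficient). -/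
theorem genFun_cExp (r : ℕ) (hr : 2 ≤ r) (n : ℕ) :
    PowerSeries.coeff (R := ℚ) n
      (PhiTrunc r n * ∑ k ∈ Finset.Icc 1 n,
        (PowerSeries.X : PowerSeries ℚ) ^ (r * k) *
          (1 - (PowerSeries.X : PowerSeries ℚ) ^ (r * k))⁻¹) = cExp r n := by
  rw [Finset.mul_sum, map_sum]
  have h1 : ∀ k ∈ Finset.Icc 1 n,
      (coeff n) (PhiTrunc r n * ((X : PowerSeries ℚ) ^ (r * k) *
        (1 - (X : PowerSeries ℚ) ^ (r * k))⁻¹))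
      = ∑ u ∈ Finset.Icc 1 n, if r * k ∣ u then ((CP r (n - u)).card : ℚ) else 0 := by
    intro k hk
    rw [Finset.mem_Icc] at hk
    exact coeff_term hr (by nlinarith [hk.1])
  rw [Finset.sum_congr rfl h1, mainNat hr (n := n)]
  push_cast
  rfl
end

section
/- For pairwise coprime integers r_1, ..., r_m ≥ 2, the number of partitions of n in which no part is divisible by r_2, ..., r_m and each part has multiplicity less than r_1 equals the number of partitions of n in which no part is divisible by any of r_1, ..., r_m. -/
open Nat Finset
open scoped Classical

namespace GlaisherAux

/-- The `r`-adic valuation (for arbitrary base). -/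
def v (r p : ℕ) : ℕ := Nat.maxPowDiv r p

/-- The `r`-free part. -/
def u (r p : ℕ) : ℕ := p / r ^ Nat.maxPowDiv r p

lemma u_mul_pow (r p : ℕ) : u r p * r ^ v r p = p :=
  Nat.div_mul_cancel (Nat.maxPowDiv.pow_dvd (p := r) (n := p))

lemma u_pos {r p : ℕ} (hp : 0 < p) : 0 < u r p := by
  rcases Nat.eq_zero_or_pos (u r p) with h | h
  · exfalso; have := u_mul_pow r p; rw [h, zero_mul] at this; omega
  · exact h

lemma not_dvd_u {r p : ℕ} (hr : 2 ≤ r) (hp : 0 < p) : ¬ r ∣ u r p := by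
  rintro ⟨k, hk⟩
  have hdvd : r ^ (v r p + 1) ∣ p := by
    refine ⟨k, ?_⟩
    calc p = u r p * r ^ v r p := (u_mul_pow r p).symm
      _ = r * k * r ^ v r p := by rw [hk]
      _ = r ^ (v r p + 1) * k := by ring
  have : v r p + 1 ≤ Nat.maxPowDiv r p :=
    (pow_dvd_iff_le_padicValNat (p := r) (by omega) (Nat.pos_iff_ne_zero.1 hp)).1 hdvd
  unfold v at this
  omega

lemma v_eq {r a : ℕ} (hr : 2 ≤ r) (ha : 0 < a) (hnd : ¬ r ∣ a) (j : ℕ) :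
    v r (a * r ^ j) = j := by
  have h0 : Nat.maxPowDiv r a = 0 := by
    by_contra h
    exact hnd (dvd_trans (dvd_pow_self r (by exact h)) Nat.maxPowDiv.pow_dvd)
  unfold v
  rw [mul_comm]
  show padicValNat r (r ^ j * a) = j
  rw [Nat.maxPowDiv.base_pow_mul (by omega) (by omega), show padicValNat r a = 0 from h0, zero_add]

lemma u_eq {r a : ℕ} (hr : 2 ≤ r) (ha : 0 < a) (hnd : ¬ r ∣ a) (j : ℕ) :
    u r (a * r ^ j) = a := by
  unfold u
  rw [show Nat.maxPowDiv r (a * r ^ j) = j from v_eq hr ha hnd j]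
  exact Nat.mul_div_cancel a (pow_pos (by omega) j)

/-- The Glaisher block: parts `a * r^j` with multiplicity the `j`-th digit of `c` in base `r`. -/
def gb (r a c : ℕ) : Multiset ℕ :=
  if h : c = 0 then 0
  else if h2 : r < 2 then 0
  else Multiset.replicate (c % r) a + gb r (a * r) (c / r)
termination_by c
decreasing_by exact Nat.div_lt_self (Nat.pos_of_ne_zero h) (by omega)

lemma gb_zero (r a : ℕ) : gb r a 0 = 0 := by rw [gb]; simp

lemma gb_sum {r : ℕ} (hr : 2 ≤ r) (c : ℕ) : ∀ a, (gb r a c).sum = a * c := by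
  induction c using Nat.strong_induction_on with
  | _ c ih =>
    intro a
    rw [gb]
    split_ifs with h1 h2
    · simp [h1]
    · omega
    · rw [Multiset.sum_add, Multiset.sum_replicate,
        ih (c / r) (Nat.div_lt_self (by omega) (by omega)) (a * r)]
      have h3 : r * (c / r) + c % r = c := Nat.div_add_mod c r
      calc (c % r) • a + a * r * (c / r) = a * (r * (c / r) + c % r) := by
            simp [smul_eq_mul]; ring
        _ = a * c := by rw [h3]

lemma gb_mem {r : ℕ} (hr : 2 ≤ r) (c : ℕ) :
    ∀ a b, b ∈ gb r a c → ∃ j, b = a * r ^ j := by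
  induction c using Nat.strong_induction_on with
  | _ c ih =>
    intro a b hb
    rw [gb] at hb
    split_ifs at hb with h1 h2
    · simp at hb
    · simp at hb
    · rw [Multiset.mem_add] at hb
      rcases hb with hb | hb
      · exact ⟨0, by simpa using Multiset.eq_of_mem_replicate hb⟩
      · obtain ⟨j, hj⟩ := ih (c / r) (Nat.div_lt_self (by omega) (by omega)) (a * r) b hb
        exact ⟨j + 1, by rw [hj]; ring⟩

lemma gb_count {r a : ℕ} (hr : 2 ≤ r) (ha : 0 < a) (c : ℕ) :
    ∀ i j, Multiset.count (a * r ^ j) (gb r (a * r ^ i) c) =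
      if i ≤ j then c / r ^ (j - i) % r else 0 := by
  induction c using Nat.strong_induction_on with
  | _ c ih =>
    intro i j
    rcases eq_or_ne c 0 with rfl | h1
    · rw [gb_zero]; simp
    · rw [gb, dif_neg h1, dif_neg (by omega : ¬ r < 2)]
      have hpowinj : (a * r ^ i = a * r ^ j) ↔ i = j := by
        constructor
        · intro h
          exact Nat.pow_right_injective hr (Nat.eq_of_mul_eq_mul_left ha h)
        · rintro rfl; rfl
      rw [Multiset.count_add, Multiset.count_replicate]
      have hrec : Multiset.count (a * r ^ j) (gb r (a * r ^ i * r) (c / r)) =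
          if i + 1 ≤ j then (c / r) / r ^ (j - (i + 1)) % r else 0 := by
        rw [show a * r ^ i * r = a * r ^ (i + 1) by ring]
        exact ih (c / r) (Nat.div_lt_self (by omega) (by omega)) (i + 1) j
      rw [hrec]
      rcases lt_trichotomy i j with hij | hij | hij
      · rw [if_neg (by rw [hpowinj]; omega), if_pos (by omega), if_pos (by omega), zero_add]
        have h4 : j - i = (j - (i + 1)) + 1 := by omega
        rw [h4, Nat.div_div_eq_div_mul]
        congr 2
        rw [pow_succ]
        ring
      · subst hij
        rw [if_pos rfl, if_neg (by omega), if_pos (by omega)]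
        simp
      · rw [if_neg (by rw [hpowinj]; omega), if_neg (by omega), if_neg (by omega)]

lemma gb_count_of_ne {r a b c : ℕ} (hr : 2 ≤ r) (hb : 0 < b) (ha : 0 < a)
    (hnd : ¬ r ∣ a) (hne : u r b ≠ a) : Multiset.count b (gb r a c) = 0 := by
  rw [Multiset.count_eq_zero]
  intro hmem
  obtain ⟨j, rfl⟩ := gb_mem hr c a b hmem
  exact hne (u_eq hr ha hnd j)

/-- The map from class-regular to regular partitions, on multisets. -/
def psi (r : ℕ) (s : Multiset ℕ) : Multiset ℕ :=
  ∑ a ∈ s.toFinset, gb r a (s.count a)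

lemma psi_sum {r : ℕ} (hr : 2 ≤ r) (s : Multiset ℕ) : (psi r s).sum = s.sum := by
  rw [psi]
  have h1 : (∑ a ∈ s.toFinset, gb r a (s.count a)).sum
      = ∑ a ∈ s.toFinset, (gb r a (s.count a)).sum :=
    map_sum Multiset.sumAddMonoidHom _ _
  rw [h1]
  conv_rhs => rw [← Multiset.toFinset_sum_count_nsmul_eq s]
  have h2 : (∑ a ∈ s.toFinset, s.count a • ({a} : Multiset ℕ)).sum
      = ∑ a ∈ s.toFinset, (s.count a • ({a} : Multiset ℕ)).sum :=
    map_sum Multiset.sumAddMonoidHom _ _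
  rw [h2]
  refine Finset.sum_congr rfl fun a _ => ?_
  rw [gb_sum hr, Multiset.nsmul_singleton, Multiset.sum_replicate, smul_eq_mul, mul_comm]

lemma psi_mem {r b : ℕ} {s : Multiset ℕ} (hr : 2 ≤ r) (hb : b ∈ psi r s) :
    ∃ a ∈ s, ∃ j, b = a * r ^ j := by
  rw [psi, Multiset.mem_sum] at hb
  obtain ⟨a, ha, hmem⟩ := hb
  obtain ⟨j, hj⟩ := gb_mem hr _ _ _ hmem
  exact ⟨a, Multiset.mem_toFinset.1 ha, j, hj⟩

lemma psi_count {r b : ℕ} {s : Multiset ℕ} (hr : 2 ≤ r)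
    (hs : ∀ a ∈ s, 0 < a ∧ ¬ r ∣ a) (hb : 0 < b) :
    Multiset.count b (psi r s) = s.count (u r b) / r ^ (v r b) % r := by
  rw [psi, Multiset.count_sum']
  rw [Finset.sum_eq_single (u r b)]
  · have hu : 0 < u r b := u_pos hb
    have : Multiset.count b (gb r (u r b) (s.count (u r b)))
        = Multiset.count (u r b * r ^ (v r b)) (gb r (u r b * r ^ 0) (s.count (u r b))) := by
      rw [u_mul_pow, pow_zero, mul_one]
    rw [this, gb_count hr hu, if_pos (Nat.zero_le _), Nat.sub_zero]
  · intro a hat hne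
    obtain ⟨ha, hnd⟩ := hs a (Multiset.mem_toFinset.1 hat)
    exact gb_count_of_ne hr hb ha hnd (Ne.symm hne)
  · intro hnot
    rw [Multiset.count_eq_zero_of_notMem (fun h => hnot (Multiset.mem_toFinset.2 h)), gb_zero]
    simp

/-- The map from regular to class-regular partitions, on multisets. -/
def phi (r : ℕ) (s : Multiset ℕ) : Multiset ℕ :=
  s.bind fun p => Multiset.replicate (r ^ v r p) (u r p)

lemma phi_sum (r : ℕ) (s : Multiset ℕ) : (phi r s).sum = s.sum := by
  rw [phi, Multiset.sum_bind]
  have : s.map (fun p => (Multiset.replicate (r ^ v r p) (u r p)).sum) = s.map id :=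
    Multiset.map_congr rfl fun p _ => by
      rw [Multiset.sum_replicate, smul_eq_mul, mul_comm, u_mul_pow]; rfl
  rw [this, Multiset.map_id]

lemma phi_mem {r b : ℕ} {s : Multiset ℕ} (hb : b ∈ phi r s) : ∃ p ∈ s, b = u r p := by
  rw [phi, Multiset.mem_bind] at hb
  obtain ⟨p, hp, hmem⟩ := hb
  exact ⟨p, hp, Multiset.eq_of_mem_replicate hmem⟩

lemma phi_count {r a K : ℕ} {s : Multiset ℕ} (hr : 2 ≤ r)
    (hs : ∀ p ∈ s, 0 < p ∧ v r p < K) (ha : 0 < a) (hnd : ¬ r ∣ a) :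
    Multiset.count a (phi r s) = ∑ j ∈ Finset.range K, s.count (a * r ^ j) * r ^ j := by
  induction s using Multiset.induction with
  | empty => simp [phi]
  | cons p s ih =>
    have hp := hs p (Multiset.mem_cons_self p s)
    have hs' : ∀ q ∈ s, 0 < q ∧ v r q < K := fun q hq => hs q (Multiset.mem_cons_of_mem hq)
    rw [phi, Multiset.cons_bind, Multiset.count_add, Multiset.count_replicate, ← phi, ih hs']
    have hcount : ∀ j, Multiset.count (a * r ^ j) (p ::ₘ s)
        = Multiset.count (a * r ^ j) s + if a * r ^ j = p then 1 else 0 := fun j =>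
      Multiset.count_cons _ _ _
    simp only [hcount, add_mul]
    rw [Finset.sum_add_distrib]
    rw [add_comm]
    congr 1
    by_cases hau : u r p = a
    · rw [if_pos hau]
      rw [Finset.sum_eq_single_of_mem (v r p) (Finset.mem_range.2 hp.2)]
      · rw [if_pos (by rw [← hau, u_mul_pow]), one_mul]
      · intro j _ hj
        rw [if_neg, zero_mul]
        intro h
        apply hj
        rw [← h, v_eq hr ha hnd j]
    · rw [if_neg hau]
      symm
      apply Finset.sum_eq_zero
      intro j _
      rw [if_neg, zero_mul]
      intro h
      exact hau (by rw [← h]; exact u_eq hr ha hnd j)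

lemma sum_digits_eq {r : ℕ} (hr : 2 ≤ r) :
    ∀ (K c : ℕ), c < r ^ K → ∑ j ∈ Finset.range K, c / r ^ j % r * r ^ j = c := by
  intro K
  induction K with
  | zero => intro c hc; simp at hc; simp [hc]
  | succ K ih =>
    intro c hc
    rw [Finset.sum_range_succ']
    have hterm : ∀ j, c / r ^ (j + 1) % r * r ^ (j + 1)
        = ((c / r) / r ^ j % r * r ^ j) * r := by
      intro j
      rw [pow_succ, ← Nat.div_div_eq_div_mul]
      ring_nf
      rw [Nat.div_div_eq_div_mul, mul_comm (r ^ j) r, ← Nat.div_div_eq_div_mul]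
    simp only [hterm]
    rw [← Finset.sum_mul, ih (c / r) (by
      rw [Nat.div_lt_iff_lt_mul (by omega)]
      calc c < r ^ (K + 1) := hc
        _ = r ^ K * r := pow_succ r K)]
    have h1 : r * (c / r) + c % r = c := Nat.div_add_mod c r
    simp only [pow_zero, Nat.div_one, mul_one]
    calc c / r * r + c % r = r * (c / r) + c % r := by ring
      _ = c := h1

lemma digit_of_sum {r : ℕ} (hr : 2 ≤ r) :
    ∀ (K : ℕ) (x : ℕ → ℕ), (∀ j, x j < r) → ∀ i,
      (∑ j ∈ Finset.range K, x j * r ^ j) / r ^ i % r = if i < K then x i else 0 := by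
  intro K
  induction K with
  | zero => intro x hx i; simp
  | succ K ih =>
    intro x hx i
    rw [Finset.sum_range_succ']
    have hterm : ∀ j, x (j + 1) * r ^ (j + 1) = (x (j + 1) * r ^ j) * r := by
      intro j; rw [pow_succ]; ring
    simp only [hterm]
    rw [← Finset.sum_mul]
    set T := ∑ j ∈ Finset.range K, x (j + 1) * r ^ j with hT
    simp only [pow_zero, mul_one]
    cases i with
    | zero =>
      rw [pow_zero, Nat.div_one, mul_comm T r, Nat.mul_add_mod, Nat.mod_eq_of_lt (hx 0)]
      simp
    | succ i =>
      have hdiv : (T * r + x 0) / r ^ (i + 1) = T / r ^ i := by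
        rw [_root_.pow_succ', ← Nat.div_div_eq_div_mul]
        congr 1
        rw [mul_comm T r, Nat.mul_add_div (by omega : 0 < r), Nat.div_eq_of_lt (hx 0), add_zero]
      rw [hdiv, ih (fun j => x (j + 1)) (fun j => hx (j + 1)) i]
      simp [Nat.succ_lt_succ_iff]

lemma mem_le_sum {s : Multiset ℕ} {a : ℕ} (h : a ∈ s) : a ≤ s.sum := by
  obtain ⟨t, rfl⟩ := Multiset.exists_cons_of_mem h
  rw [Multiset.sum_cons]
  exact Nat.le_add_right _ _

lemma count_le_sum (s : Multiset ℕ) (hs : ∀ x ∈ s, 0 < x) (a : ℕ) :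
    s.count a ≤ s.sum := by
  calc s.count a ≤ Multiset.card s := Multiset.count_le_card a s
    _ = Multiset.card s • 1 := by simp
    _ ≤ s.sum := Multiset.card_nsmul_le_sum hs

/-- Partition-level Glaisher map (regular → class-regular). -/
def phiPart {n : ℕ} (r : ℕ) (hr : 2 ≤ r) (l : n.Partition) : n.Partition where
  parts := phi r l.parts
  parts_pos := fun hb => by
    obtain ⟨p, hp, rfl⟩ := phi_mem hb
    exact u_pos (l.parts_pos hp)
  parts_sum := by rw [phi_sum, l.parts_sum]

/-- Partition-level Glaisher map (class-regular → regular). -/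
def psiPart {n : ℕ} (r : ℕ) (hr : 2 ≤ r) (l : n.Partition) : n.Partition where
  parts := psi r l.parts
  parts_pos := fun hb => by
    obtain ⟨a, ha, j, rfl⟩ := psi_mem hr hb
    exact Nat.mul_pos (l.parts_pos ha) (pow_pos (by omega) j)
  parts_sum := by rw [psi_sum hr, l.parts_sum]

end GlaisherAux

open GlaisherAux

/-- For pairwise coprime `r 0, r 1, …, r m ≥ 2`, the number of partitions of `n` with no part
divisible by `r 1, …, r m` and every part of multiplicity `< r 0` equals the number of
partitions of `n` with no part divisible by any of `r 0, …, r m`. -/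
theorem card_regular_eq_card_classRegular (m : ℕ) (r : Fin (m + 1) → ℕ)
    (hr : ∀ i, 2 ≤ r i) (hcop : ∀ i j, i ≠ j → Nat.Coprime (r i) (r j)) (n : ℕ) :
    (Finset.univ.filter (fun l : n.Partition =>
        (∀ p ∈ l.parts, ∀ i : Fin (m + 1), i ≠ 0 → ¬ r i ∣ p) ∧
        ∀ i, l.parts.count i < r 0)).card =
    (Finset.univ.filter (fun l : n.Partition =>
        ∀ p ∈ l.parts, ∀ i : Fin (m + 1), ¬ r i ∣ p)).card := by
  set r0 := r 0 with hr0def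
  have hr0 : 2 ≤ r0 := hr 0
  set K := n + 1 with hKdef
  have hK : n < r0 ^ K := by
    calc n < 2 ^ n := Nat.lt_two_pow_self
      _ ≤ 2 ^ K := Nat.pow_le_pow_right (by omega) (by omega)
      _ ≤ r0 ^ K := Nat.pow_le_pow_left hr0 K
  -- parts of any partition of n are ≤ n, hence have small valuation
  have hvlt : ∀ (l : n.Partition), ∀ p ∈ l.parts, 0 < p ∧ v r0 p < K := by
    intro l p hp
    have hppos := l.parts_pos hp
    refine ⟨hppos, ?_⟩
    have h1 : r0 ^ v r0 p ≤ p := Nat.le_of_dvd hppos Nat.maxPowDiv.pow_dvd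
    have h2 : p ≤ n := l.parts_sum ▸ mem_le_sum hp
    have h3 : r0 ^ v r0 p < r0 ^ K := by omega
    exact (Nat.pow_lt_pow_iff_right (by omega)).1 h3
  apply Finset.card_bij' (fun l _ => phiPart r0 hr0 l) (fun l _ => psiPart r0 hr0 l)
  · -- phiPart maps LHS into RHS
    intro l hl
    rw [Finset.mem_filter] at hl ⊢
    obtain ⟨-, hreg, hmult⟩ := hl
    refine ⟨Finset.mem_univ _, ?_⟩
    intro b hb i
    obtain ⟨p, hp, rfl⟩ := phi_mem hb
    by_cases hi : i = 0
    · subst hi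
      exact not_dvd_u hr0 (l.parts_pos hp)
    · intro hdvd
      apply hreg p hp i hi
      exact dvd_trans hdvd ⟨r0 ^ v r0 p, (u_mul_pow r0 p).symm⟩
  · -- psiPart maps RHS into LHS
    intro l hl
    rw [Finset.mem_filter] at hl ⊢
    obtain ⟨-, hcr⟩ := hl
    refine ⟨Finset.mem_univ _, ?_, ?_⟩
    · intro b hb i hi
      obtain ⟨a, ha, j, rfl⟩ := psi_mem hr0 hb
      intro hdvd
      apply hcr a ha i
      have hcop' : Nat.Coprime (r i) (r0 ^ j) := (hcop i 0 hi).pow_right j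
      exact hcop'.dvd_of_dvd_mul_right hdvd
    · intro b
      show Multiset.count b (psi r0 l.parts) < r0
      rcases Nat.eq_zero_or_pos b with rfl | hb
      · rw [Multiset.count_eq_zero_of_notMem]
        · omega
        · intro hmem
          obtain ⟨a, ha, j, hj⟩ := psi_mem hr0 hmem
          have := l.parts_pos ha
          have : 0 < r0 ^ j := pow_pos (by omega) j
          nlinarith
      · rw [psi_count hr0 (fun a ha => ⟨l.parts_pos ha, hcr a ha 0⟩) hb]
        exact Nat.mod_lt _ (by omega)
  · -- psiPart ∘ phiPart = id on LHS
    intro l hl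
    rw [Finset.mem_filter] at hl
    obtain ⟨-, hreg, hmult⟩ := hl
    apply Nat.Partition.ext
    show psi r0 (phi r0 l.parts) = l.parts
    ext b
    rcases Nat.eq_zero_or_pos b with rfl | hb
    · rw [Multiset.count_eq_zero_of_notMem, Multiset.count_eq_zero_of_notMem]
      · intro hmem; exact absurd (l.parts_pos hmem) (by omega)
      · intro hmem
        obtain ⟨a, ha, j, hj⟩ := psi_mem hr0 hmem
        obtain ⟨p, hp, rfl⟩ := phi_mem ha
        have h1 : 0 < u r0 p := u_pos (l.parts_pos hp)
        have : 0 < r0 ^ j := pow_pos (by omega) j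
        nlinarith
    · have hphi : ∀ a ∈ phi r0 l.parts, 0 < a ∧ ¬ r0 ∣ a := by
        intro a ha
        obtain ⟨p, hp, rfl⟩ := phi_mem ha
        exact ⟨u_pos (l.parts_pos hp), not_dvd_u hr0 (l.parts_pos hp)⟩
      rw [psi_count hr0 hphi hb]
      rw [phi_count (K := K) hr0 (hvlt l) (u_pos hb) (not_dvd_u hr0 hb)]
      rw [digit_of_sum hr0 K (fun j => l.parts.count (u r0 b * r0 ^ j)) (fun j => hmult _) (v r0 b)]
      by_cases hvb : v r0 b < K
      · rw [if_pos hvb, u_mul_pow]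
      · rw [if_neg hvb]
        symm
        rw [Multiset.count_eq_zero_of_notMem]
        intro hmem
        have h2 : b ≤ n := l.parts_sum ▸ mem_le_sum hmem
        have h3 : r0 ^ K ≤ r0 ^ v r0 b := Nat.pow_le_pow_right (by omega) (by omega)
        have h4 : r0 ^ v r0 b ≤ b := by
          conv_rhs => rw [← u_mul_pow r0 b]
          exact Nat.le_mul_of_pos_left _ (u_pos hb)
        omega
  · -- phiPart ∘ psiPart = id on RHS
    intro l hl
    rw [Finset.mem_filter] at hl
    obtain ⟨-, hcr⟩ := hl
    apply Nat.Partition.ext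
    show phi r0 (psi r0 l.parts) = l.parts
    ext a
    have hgood : ∀ x ∈ l.parts, 0 < x ∧ ¬ r0 ∣ x := fun x hx => ⟨l.parts_pos hx, hcr x hx 0⟩
    by_cases hok : 0 < a ∧ ¬ r0 ∣ a
    · obtain ⟨ha, hnd⟩ := hok
      have hpsiparts : ∀ p ∈ psi r0 l.parts, 0 < p ∧ v r0 p < K := by
        intro p hp
        obtain ⟨x, hx, j, rfl⟩ := psi_mem hr0 hp
        have hxpos := l.parts_pos hx
        have hppos : 0 < x * r0 ^ j :=
          Nat.mul_pos hxpos (pow_pos (by omega) j)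
        refine ⟨hppos, ?_⟩
        have h1 : r0 ^ v r0 (x * r0 ^ j) ≤ x * r0 ^ j :=
          Nat.le_of_dvd hppos Nat.maxPowDiv.pow_dvd
        have h2 : x * r0 ^ j ≤ n := by
          have := mem_le_sum hp
          rwa [psi_sum hr0, l.parts_sum] at this
        have h3 : r0 ^ v r0 (x * r0 ^ j) < r0 ^ K := by omega
        exact (Nat.pow_lt_pow_iff_right (by omega)).1 h3
      rw [phi_count (K := K) hr0 hpsiparts ha hnd]
      have hterm : ∀ j, (psi r0 l.parts).count (a * r0 ^ j) * r0 ^ j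
          = l.parts.count a / r0 ^ j % r0 * r0 ^ j := by
        intro j
        rw [psi_count hr0 hgood (Nat.mul_pos ha (pow_pos (by omega) j)),
          u_eq hr0 ha hnd j, v_eq hr0 ha hnd j]
      simp only [hterm]
      apply sum_digits_eq hr0
      have := count_le_sum l.parts (fun x hx => l.parts_pos hx) a
      rw [l.parts_sum] at this
      omega
    · -- a is zero or divisible by r0: both counts vanish
      rw [Multiset.count_eq_zero_of_notMem, Multiset.count_eq_zero_of_notMem]
      · intro hmem
        exact hok ⟨l.parts_pos hmem, hcr a hmem 0⟩
      · intro hmem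
        obtain ⟨p, hp, rfl⟩ := phi_mem hmem
        obtain ⟨x, hx, j, rfl⟩ := psi_mem hr0 hp
        have hxpos := l.parts_pos hx
        have hxnd := hcr x hx 0
        have hppos : 0 < x * r0 ^ j := Nat.mul_pos hxpos (pow_pos (by omega) j)
        rw [u_eq hr0 hxpos hxnd j] at hok
        exact hok ⟨hxpos, hxnd⟩
end
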